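/- For every l ≥ 2, the polynomial f_{B_l}(t) = Σ_{k=0}^{l} (-1)^k C(l,k)·C(l+k,k)·t^k is divisible by 2t−1 in ℚ[t] if and only if l is odd. -/

import Mathlib

open Polynomial Finset

noncomputable def fB (l : ℕ) : Polynomial ℚ :=
  ∑ k ∈ Finset.range (l + 1),
    Polynomial.C ((-1 : ℚ) ^ k * (l.choose k) * ((l + k).choose k)) * Polynomial.X ^ k

lemma aux_sign (l j : ℕ) (hjl : j ≤ l) :
    (-1 : ℚ) ^ (l - j) = (-1) ^ l * (-1) ^ j := by
  have h1 : (-1 : ℚ) ^ (l - j) * (-1) ^ j = (-1) ^ l := by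
    rw [← pow_add]; congr 1; omega
  have hj2 : ((-1 : ℚ) ^ j) * ((-1) ^ j) = 1 := by
    rw [← pow_add]; exact Even.neg_one_pow ⟨j, by ring⟩
  calc (-1 : ℚ) ^ (l - j) = (-1) ^ (l - j) * ((-1) ^ j * (-1) ^ j) := by rw [hj2, mul_one]
    _ = ((-1) ^ (l - j) * (-1) ^ j) * (-1) ^ j := by ring
    _ = (-1) ^ l * (-1) ^ j := by rw [h1]

lemma aux_one_eq (n : ℕ) :
    ∑ i ∈ Finset.range (n + 1), (-1 : ℚ) ^ i * (n.choose i) * 2 ^ (n - i) = 1 := by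
  have h := add_pow (-1 : ℚ) 2 n
  norm_num at h
  calc ∑ i ∈ Finset.range (n + 1), (-1 : ℚ) ^ i * (n.choose i) * 2 ^ (n - i)
      = ∑ i ∈ Finset.range (n + 1), (-1 : ℚ) ^ i * 2 ^ (n - i) * (n.choose i) := by
        apply Finset.sum_congr rfl; intro i _; ring
    _ = 1 := h.symm

lemma aux_inner (l j : ℕ) (hj : j ≤ l) :
    ∑ k ∈ Finset.range (l + 1), (-1 : ℚ) ^ k * (l.choose k) * (k.choose j) * 2 ^ (l - k)
      = (-1) ^ j * (l.choose j) := by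
  have hsub : Finset.Ico j (l + 1) ⊆ Finset.range (l + 1) := by
    intro k hk; simp only [Finset.mem_Ico] at hk; simp [hk.2]
  have h1 : ∑ k ∈ Finset.range (l + 1),
      (-1 : ℚ) ^ k * (l.choose k) * (k.choose j) * 2 ^ (l - k)
      = ∑ k ∈ Finset.Ico j (l + 1),
      (-1 : ℚ) ^ k * (l.choose k) * (k.choose j) * 2 ^ (l - k) := by
    refine (Finset.sum_subset hsub ?_).symm
    intro k hk hk'
    rw [Finset.mem_range] at hk
    rw [Finset.mem_Ico] at hk'
    push_neg at hk'
    have hkj : k < j := by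
      by_contra hc
      push_neg at hc
      have := hk' hc
      omega
    rw [Nat.choose_eq_zero_of_lt hkj]
    simp
  rw [h1, Finset.sum_Ico_eq_sum_range]
  have hlen : l + 1 - j = (l - j) + 1 := by omega
  rw [hlen]
  have h2 : ∀ i ∈ Finset.range (l - j + 1),
      (-1 : ℚ) ^ (j + i) * (l.choose (j + i)) * ((j + i).choose j) * 2 ^ (l - (j + i))
      = ((-1) ^ j * (l.choose j)) * ((-1 : ℚ) ^ i * ((l - j).choose i) * 2 ^ ((l - j) - i)) := by
    intro i hi
    simp only [Finset.mem_range] at hi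
    have hji : j + i ≤ l := by omega
    have hc : (l.choose (j + i)) * ((j + i).choose j) = l.choose j * ((l - j).choose i) := by
      have := Nat.choose_mul (n := l) (k := j + i) (s := j) (Nat.le_add_right j i)
      simpa using this
    have hcQ : ((l.choose (j + i) : ℚ)) * ((j + i).choose j)
        = (l.choose j : ℚ) * ((l - j).choose i) := by exact_mod_cast hc
    have hsub2 : l - (j + i) = (l - j) - i := by omega
    rw [hsub2, pow_add]
    linear_combination ((-1 : ℚ) ^ j * (-1 : ℚ) ^ i * (2 : ℚ) ^ (l - j - i)) * hcQ
  rw [Finset.sum_congr rfl h2, ← Finset.mul_sum, aux_one_eq (l - j), mul_one]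

lemma aux_key (l : ℕ) :
    ∑ k ∈ Finset.range (l + 1),
      (-1 : ℚ) ^ k * (l.choose k) * ((l + k).choose k) * 2 ^ (l - k)
    = ∑ j ∈ Finset.range (l + 1), (-1 : ℚ) ^ j * (l.choose j) ^ 2 := by
  have hvdm : ∀ k : ℕ, ((l + k).choose k : ℚ)
      = ∑ j ∈ Finset.range (l + 1), (l.choose j : ℚ) * (k.choose (l - j)) := by
    intro k
    have h0 : (l + k).choose k = (l + k).choose l := (Nat.choose_symm_add).symm
    have h1 := Nat.add_choose_eq l k l
    rw [Finset.Nat.sum_antidiagonal_eq_sum_range_succ_mk] at h1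
    rw [h0, h1]
    push_cast
    rfl
  calc
    ∑ k ∈ Finset.range (l + 1),
        (-1 : ℚ) ^ k * (l.choose k) * ((l + k).choose k) * 2 ^ (l - k)
      = ∑ k ∈ Finset.range (l + 1), ∑ j ∈ Finset.range (l + 1),
        (l.choose j : ℚ) * ((-1) ^ k * (l.choose k) * (k.choose (l - j)) * 2 ^ (l - k)) := by
        apply Finset.sum_congr rfl
        intro k _
        rw [hvdm k, Finset.mul_sum, Finset.sum_mul]
        apply Finset.sum_congr rfl
        intro j _
        ring
    _ = ∑ j ∈ Finset.range (l + 1), (l.choose j : ℚ) *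
          ∑ k ∈ Finset.range (l + 1),
            (-1 : ℚ) ^ k * (l.choose k) * (k.choose (l - j)) * 2 ^ (l - k) := by
        rw [Finset.sum_comm]
        apply Finset.sum_congr rfl
        intro j _
        rw [Finset.mul_sum]
    _ = ∑ j ∈ Finset.range (l + 1), (-1 : ℚ) ^ (l - j) * (l.choose j) ^ 2 := by
        apply Finset.sum_congr rfl
        intro j hj
        simp only [Finset.mem_range] at hj
        have hjl : j ≤ l := by omega
        rw [aux_inner l (l - j) (by omega), Nat.choose_symm hjl]
        ring
    _ = ∑ j ∈ Finset.range (l + 1), (-1 : ℚ) ^ j * (l.choose j) ^ 2 := by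
        rw [← Finset.sum_range_reflect]
        apply Finset.sum_congr rfl
        intro j hj
        simp only [Finset.mem_range] at hj
        have hjl : j ≤ l := by omega
        have h1 : l + 1 - 1 - j = l - j := by omega
        rw [h1]
        have h2 : l - (l - j) = j := by omega
        rw [h2, Nat.choose_symm hjl]

lemma aux_B_odd (l : ℕ) (h : Odd l) :
    ∑ j ∈ Finset.range (l + 1), (-1 : ℚ) ^ j * (l.choose j) ^ 2 = 0 := by
  have hr := Finset.sum_range_reflect (fun j => (-1 : ℚ) ^ j * (l.choose j) ^ 2) (l + 1)
  have key : ∑ j ∈ Finset.range (l + 1), (-1 : ℚ) ^ j * (l.choose j) ^ 2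
      = - ∑ j ∈ Finset.range (l + 1), (-1 : ℚ) ^ j * (l.choose j) ^ 2 := by
    conv_lhs => rw [← hr]
    rw [← Finset.sum_neg_distrib]
    apply Finset.sum_congr rfl
    intro j hj
    simp only [Finset.mem_range] at hj
    have hjl : j ≤ l := by omega
    have h1 : l + 1 - 1 - j = l - j := by omega
    rw [h1, Nat.choose_symm hjl, aux_sign l j hjl, h.neg_one_pow]
    ring
  linarith [key]

lemma aux_expand (p : ℚ[X]) (n : ℕ) :
    (1 - p) ^ n
      = ∑ k ∈ Finset.range (n + 1), Polynomial.C ((-1 : ℚ) ^ k * (n.choose k)) * p ^ k := by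
  have h := add_pow (-p) 1 n
  calc (1 - p) ^ n = (-p + 1) ^ n := by ring
    _ = ∑ k ∈ Finset.range (n + 1), (-p) ^ k * 1 ^ (n - k) * (n.choose k : ℚ[X]) := h
    _ = ∑ k ∈ Finset.range (n + 1), Polynomial.C ((-1 : ℚ) ^ k * (n.choose k)) * p ^ k := by
        apply Finset.sum_congr rfl
        intro k _
        rw [neg_pow, one_pow, mul_one, Polynomial.C_mul, Polynomial.C_pow,
          map_neg, map_one, Polynomial.C_eq_natCast]
        ring

lemma aux_B_even (m : ℕ) :
    ∑ j ∈ Finset.range (2 * m + 1), (-1 : ℚ) ^ j * ((2 * m).choose j) ^ 2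
      = (-1) ^ m * ((2 * m).choose m) := by
  set l := 2 * m with hl
  have hq : ∀ j : ℕ, ((1 - X : ℚ[X]) ^ l).coeff j = (-1 : ℚ) ^ j * (l.choose j) := by
    intro j
    rw [aux_expand X l, Polynomial.finset_sum_coeff]
    simp only [Polynomial.coeff_C_mul, Polynomial.coeff_X_pow]
    by_cases hjl : j ≤ l
    · rw [Finset.sum_eq_single j]
      · simp
      · intro k _ hk; simp [Ne.symm hk]
      · intro hj; simp at hj; omega
    · push_neg at hjl
      rw [Finset.sum_eq_zero, Nat.choose_eq_zero_of_lt hjl]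
      · simp
      · intro k hk
        simp only [Finset.mem_range] at hk
        have : j ≠ k := by omega
        simp [this]
  have hp : ∀ j : ℕ, ((X + 1 : ℚ[X]) ^ l).coeff j = (l.choose j : ℚ) := by
    intro j
    rw [Polynomial.coeff_X_add_one_pow]
  have hB : (((X + 1 : ℚ[X]) ^ l) * ((1 - X) ^ l)).coeff l
      = ∑ j ∈ Finset.range (l + 1), (-1 : ℚ) ^ j * (l.choose j) ^ 2 := by
    rw [Polynomial.coeff_mul, Finset.Nat.sum_antidiagonal_eq_sum_range_succ_mk]
    apply Finset.sum_congr rfl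
    intro j hj
    simp only [Finset.mem_range] at hj
    have hjl : j ≤ l := by omega
    rw [hp j, hq (l - j), Nat.choose_symm hjl, aux_sign l j hjl,
      Even.neg_one_pow (⟨m, by omega⟩ : Even l)]
    ring
  have hprod : ((X + 1 : ℚ[X]) ^ l) * ((1 - X) ^ l) = (1 - X ^ 2) ^ l := by
    rw [← mul_pow]; congr 1; ring
  have hcoeff : ((1 - X ^ 2 : ℚ[X]) ^ l).coeff l = (-1 : ℚ) ^ m * (l.choose m) := by
    rw [aux_expand (X ^ 2) l, Polynomial.finset_sum_coeff]
    simp only [Polynomial.coeff_C_mul, ← pow_mul, Polynomial.coeff_X_pow]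
    rw [Finset.sum_eq_single m]
    · simp [hl, two_mul, mul_comm]
    · intro k _ hk
      have : l ≠ 2 * k := by omega
      simp [this]
    · intro hm; simp at hm; omega
  rw [← hB, hprod, hcoeff]

theorem fB_divisible_iff_odd (l : ℕ) (hl : 2 ≤ l) :
    (2 * Polynomial.X - 1) ∣ fB l ↔ Odd l := by
  have hC2 : ((2 : ℚ[X])) = Polynomial.C 2 := by
    exact (map_ofNat Polynomial.C 2).symm
  have hCC : (Polynomial.C (2 : ℚ)) * Polynomial.C 2⁻¹ = 1 := by
    rw [← Polynomial.C_mul]; norm_num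
  have hfac : (2 * Polynomial.X - 1 : ℚ[X])
      = Polynomial.C 2 * (X - Polynomial.C 2⁻¹) := by
    rw [mul_sub, ← Polynomial.C_mul]
    norm_num
    exact hC2
  have hdvd : (2 * Polynomial.X - 1 : ℚ[X]) ∣ fB l ↔ (X - Polynomial.C 2⁻¹) ∣ fB l := by
    rw [hfac]
    constructor
    · intro h
      exact dvd_trans (dvd_mul_left _ _) h
    · rintro ⟨g, hg⟩
      refine ⟨Polynomial.C 2⁻¹ * g, ?_⟩
      rw [hg]
      linear_combination (-(X - Polynomial.C (2⁻¹ : ℚ)) * g) * hCC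
  rw [hdvd, Polynomial.dvd_iff_isRoot, Polynomial.IsRoot.def]
  have heval : (fB l).eval 2⁻¹ =
      ∑ k ∈ Finset.range (l + 1),
        (-1 : ℚ) ^ k * (l.choose k) * ((l + k).choose k) * (2⁻¹ : ℚ) ^ k := by
    rw [fB, Polynomial.eval_finset_sum]
    simp only [Polynomial.eval_mul, Polynomial.eval_C, Polynomial.eval_pow, Polynomial.eval_X]
  rw [heval]
  have hscale : (2 : ℚ) ^ l *
      (∑ k ∈ Finset.range (l + 1),
        (-1 : ℚ) ^ k * (l.choose k) * ((l + k).choose k) * (2⁻¹ : ℚ) ^ k)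
      = ∑ j ∈ Finset.range (l + 1), (-1 : ℚ) ^ j * (l.choose j) ^ 2 := by
    rw [Finset.mul_sum, ← aux_key l]
    apply Finset.sum_congr rfl
    intro k hk
    simp only [Finset.mem_range] at hk
    have hkl : k ≤ l := by omega
    have hpw : (2 : ℚ) ^ l * (2⁻¹ : ℚ) ^ k = 2 ^ (l - k) := by
      have h : (2 : ℚ) ^ (l - k) * 2 ^ k = 2 ^ l := by rw [← pow_add]; congr 1; omega
      rw [inv_pow, ← h]
      field_simp
    rw [← hpw]; ring
  have h2l : (2 : ℚ) ^ l ≠ 0 := by positivity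
  constructor
  · intro h0
    by_contra hodd
    rw [Nat.not_odd_iff_even] at hodd
    obtain ⟨m, hm⟩ := hodd
    have hm' : l = 2 * m := by omega
    have hB := aux_B_even m
    rw [← hm'] at hB
    rw [h0, mul_zero] at hscale
    rw [← hscale] at hB
    have hch : (0 : ℚ) < l.choose m := by
      exact_mod_cast Nat.choose_pos (show m ≤ l by omega)
    have habs : ((-1 : ℚ)) ^ m * (l.choose m) ≠ 0 :=
      mul_ne_zero (pow_ne_zero _ (by norm_num)) (ne_of_gt hch)
    exact habs hB.symm
  · intro hodd
    have hB := aux_B_odd l hodd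
    rw [hB] at hscale
    rcases mul_eq_zero.mp hscale with h | h
    · exact absurd h h2l
    · exact h
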